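/- Let M ∈ ℂ^{m×N} be a random matrix with rows m_1, …, m_m. Then E‖MM* − I‖_2 ≤ E[max_{i∈[m]} |‖m_i‖_2^2 − 1|] + 4 max_{T ⊆ [m]} E‖M_T M_{T̄}*‖_2, where M_T is the restriction of M to the rows indexed by T and T̄ = [m]\T. -/

import Mathlib

open MeasureTheory Matrix

noncomputable def lpNorm {n : ℕ} (p : ℝ) (x : Fin n → ℂ) : ℝ :=
  (∑ i, ‖x i‖ ^ p) ^ (1 / p)

/-- Spectral norm (operator norm induced by the Euclidean norms). -/
noncomputable def specNorm {a b : ℕ} (B : Matrix (Fin a) (Fin b) ℂ) : ℝ :=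
  sSup ((fun x => lpNorm 2 (B.mulVec x)) '' {x : Fin b → ℂ | lpNorm 2 x ≤ 1})

/-- The decoupled off-diagonal block `M_T M_{T̄}*`, padded by zeros to an `m × m` matrix
(this padding leaves the spectral norm unchanged). -/
noncomputable def decoupledBlock {m N : ℕ} (M : Matrix (Fin m) (Fin N) ℂ)
    (T : Finset (Fin m)) : Matrix (Fin m) (Fin m) ℂ :=
  Matrix.of fun i k => if i ∈ T ∧ k ∉ T then (M * Mᴴ) i k else 0

open scoped Matrix.Norms.L2Operator

lemma lpNorm_two_eq {n : ℕ} (x : Fin n → ℂ) :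
    lpNorm 2 x = ‖(WithLp.equiv 2 (Fin n → ℂ)).symm x‖ := by
  rw [_root_.lpNorm, EuclideanSpace.norm_eq, Real.sqrt_eq_rpow]
  congr 1
  refine Finset.sum_congr rfl fun i _ => ?_
  rw [show ((WithLp.equiv 2 (Fin n → ℂ)).symm x).ofLp i = x i from rfl]
  rw [show (2:ℝ) = ((2:ℕ):ℝ) by norm_num, Real.rpow_natCast]

lemma lpNorm_smul {n : ℕ} (c : ℂ) (x : Fin n → ℂ) :
    lpNorm 2 (c • x) = ‖c‖ * lpNorm 2 x := by
  rw [lpNorm_two_eq, lpNorm_two_eq,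
    show (WithLp.equiv 2 (Fin n → ℂ)).symm (c • x)
      = c • (WithLp.equiv 2 (Fin n → ℂ)).symm x from rfl, norm_smul]

lemma lpNorm_smul_zero {n : ℕ} : lpNorm 2 (0 : Fin n → ℂ) = 0 := by
  rw [lpNorm_two_eq]
  simp

lemma specNorm_eq {a b : ℕ} (B : Matrix (Fin a) (Fin b) ℂ) : specNorm B = ‖B‖ := by
  have hub : ∀ r ∈ (fun x => lpNorm 2 (B.mulVec x)) '' {x : Fin b → ℂ | lpNorm 2 x ≤ 1},
      r ≤ ‖B‖ := by
    rintro r ⟨x, hx, rfl⟩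
    rw [Set.mem_setOf_eq, lpNorm_two_eq] at hx
    show lpNorm 2 (B.mulVec x) ≤ ‖B‖
    rw [lpNorm_two_eq]
    calc ‖(WithLp.equiv 2 (Fin a → ℂ)).symm (B.mulVec x)‖
        ≤ ‖B‖ * ‖(WithLp.equiv 2 (Fin b → ℂ)).symm x‖ := by
          simpa using B.l2_opNorm_mulVec ((WithLp.equiv 2 (Fin b → ℂ)).symm x)
      _ ≤ ‖B‖ * 1 := by
          exact mul_le_mul_of_nonneg_left hx (norm_nonneg _)
      _ = ‖B‖ := mul_one _
  have hbdd : BddAbove ((fun x => lpNorm 2 (B.mulVec x)) '' {x : Fin b → ℂ | lpNorm 2 x ≤ 1}) :=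
    ⟨‖B‖, hub⟩
  have hmem0 : (0:ℝ) ∈ (fun x => lpNorm 2 (B.mulVec x)) '' {x : Fin b → ℂ | lpNorm 2 x ≤ 1} := by
    refine ⟨0, by simp [lpNorm_two_eq], ?_⟩
    simp [Matrix.mulVec_zero, lpNorm_two_eq]
  have hnn : (0:ℝ) ≤ specNorm B := le_csSup hbdd hmem0
  refine le_antisymm (Real.sSup_le hub (norm_nonneg _)) ?_
  rw [Matrix.l2_opNorm_def]
  refine ContinuousLinearMap.opNorm_le_bound _ hnn fun x => ?_
  have hfx : ‖(Matrix.toEuclideanLin.trans LinearMap.toContinuousLinearMap B) x‖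
      = lpNorm 2 (B.mulVec (WithLp.equiv 2 (Fin b → ℂ) x)) := by
    rw [LinearEquiv.trans_apply, LinearMap.coe_toContinuousLinearMap',
      Matrix.toEuclideanLin_apply, lpNorm_two_eq]
    rfl
  have hx : ‖x‖ = lpNorm 2 (WithLp.equiv 2 (Fin b → ℂ) x) := by
    rw [lpNorm_two_eq, Equiv.symm_apply_apply]
  rw [hfx, hx]
  set z : Fin b → ℂ := WithLp.equiv 2 (Fin b → ℂ) x with hz
  clear_value z
  clear hfx hx hz x
  rcases eq_or_ne z 0 with rfl | hz0
  · simp [Matrix.mulVec_zero, lpNorm_smul_zero]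
  · have hzn : lpNorm 2 z ≠ 0 := by
      rw [lpNorm_two_eq]
      exact fun h => hz0 (by simpa using norm_eq_zero.mp h)
    have hznn : 0 ≤ lpNorm 2 z := by rw [lpNorm_two_eq]; exact norm_nonneg _
    set c : ℂ := (lpNorm 2 z : ℂ) with hc
    have hcn : c ≠ 0 := by
      simpa [hc] using hzn
    have hcnorm : ‖c‖ = lpNorm 2 z := by
      rw [hc, Complex.norm_real, Real.norm_of_nonneg hznn]
    have h1 : lpNorm 2 (c⁻¹ • z) ≤ 1 := by
      rw [lpNorm_smul, norm_inv, hcnorm, inv_mul_cancel₀ hzn]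
    have hmem : lpNorm 2 (B.mulVec (c⁻¹ • z)) ∈
        (fun x => lpNorm 2 (B.mulVec x)) '' {x : Fin b → ℂ | lpNorm 2 x ≤ 1} :=
      ⟨c⁻¹ • z, h1, rfl⟩
    have hle : lpNorm 2 (B.mulVec (c⁻¹ • z)) ≤ specNorm B := le_csSup hbdd hmem
    have hzeq : B.mulVec z = c • B.mulVec (c⁻¹ • z) := by
      rw [Matrix.mulVec_smul, smul_smul, mul_inv_cancel₀ hcn, one_smul]
    rw [hzeq, lpNorm_smul, hcnorm, mul_comm]
    exact mul_le_mul_of_nonneg_right hle hznn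

lemma norm_diagonal_le {m : ℕ} (d : Fin m → ℂ) :
    ‖(Matrix.diagonal d : Matrix (Fin m) (Fin m) ℂ)‖ ≤ ⨆ i, ‖d i‖ := by
  have hc : (0:ℝ) ≤ ⨆ i, ‖d i‖ := Real.iSup_nonneg fun i => norm_nonneg _
  rw [Matrix.l2_opNorm_def]
  refine ContinuousLinearMap.opNorm_le_bound _ hc fun x => ?_
  have hbd : ∀ i, ‖d i‖ ≤ ⨆ j, ‖d j‖ := fun i =>
    le_ciSup (f := fun j => ‖d j‖) (Set.Finite.bddAbove (Set.finite_range _)) i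
  rw [LinearEquiv.trans_apply, LinearMap.coe_toContinuousLinearMap',
    Matrix.toEuclideanLin_apply]
  rw [EuclideanSpace.norm_eq, EuclideanSpace.norm_eq]
  rw [← Real.sqrt_sq hc, ← Real.sqrt_mul (by positivity)]
  apply Real.sqrt_le_sqrt
  rw [Finset.mul_sum]
  refine Finset.sum_le_sum fun i _ => ?_
  simp only [PiLp.toLp_apply, Matrix.mulVec_diagonal]
  rw [norm_mul, mul_pow]
  have hx : (0:ℝ) ≤ ‖(WithLp.equiv 2 (Fin m → ℂ) x) i‖ ^ 2 := by positivity
  exact mul_le_mul_of_nonneg_right (pow_le_pow_left₀ (norm_nonneg _) (hbd i) 2) hx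

lemma diag_entry {m N : ℕ} (M : Matrix (Fin m) (Fin N) ℂ) (i : Fin m) :
    (M * Mᴴ) i i = ((lpNorm 2 (M i) ^ 2 : ℝ) : ℂ) := by
  have h1 : lpNorm 2 (M i) ^ 2 = ∑ j, ‖M i j‖ ^ 2 := by
    rw [_root_.lpNorm, ← Real.rpow_natCast ((∑ j, ‖M i j‖ ^ (2:ℝ)) ^ (1/(2:ℝ))) 2,
      ← Real.rpow_mul (by positivity)]
    norm_num
  rw [h1]
  push_cast
  rw [Matrix.mul_apply]
  refine Finset.sum_congr rfl fun j _ => ?_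
  rw [Matrix.conjTranspose_apply]
  rw [show star (M i j) = (starRingEnd ℂ) (M i j) from rfl, Complex.mul_conj']

lemma count_filter {m : ℕ} {i k : Fin m} (h : i ≠ k) :
    (Finset.univ.filter fun T : Finset (Fin m) => i ∈ T ∧ k ∉ T).card = 2 ^ (m - 2) := by
  have key : (Finset.univ.filter fun T : Finset (Fin m) => i ∈ T ∧ k ∉ T).card
      = ((Finset.univ.erase k).erase i).powerset.card := by
    refine Finset.card_nbij' (fun T => T.erase i) (fun S => insert i S) ?_ ?_ ?_ ?_
    · intro T hT
      rw [Finset.mem_coe, Finset.mem_filter] at hT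
      rw [Finset.mem_coe, Finset.mem_powerset]
      intro x hx
      rw [Finset.mem_erase] at hx ⊢
      refine ⟨hx.1, Finset.mem_erase.mpr ⟨?_, Finset.mem_univ x⟩⟩
      rintro rfl
      exact hT.2.2 hx.2
    · intro S hS
      rw [Finset.mem_coe, Finset.mem_powerset] at hS
      rw [Finset.mem_coe, Finset.mem_filter]
      refine ⟨Finset.mem_univ _, Finset.mem_insert_self _ _, ?_⟩
      intro hk
      rcases Finset.mem_insert.mp hk with h' | h'
      · exact h h'.symm
      · have := hS h'
        rw [Finset.mem_erase, Finset.mem_erase] at this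
        exact this.2.1 rfl
    · intro T hT
      rw [Finset.mem_coe, Finset.mem_filter] at hT
      exact Finset.insert_erase hT.2.1
    · intro S hS
      rw [Finset.mem_coe, Finset.mem_powerset] at hS
      refine Finset.erase_insert ?_
      intro hi
      have := hS hi
      rw [Finset.mem_erase] at this
      exact this.1 rfl
  rw [key, Finset.card_powerset]
  congr 1
  rw [Finset.card_erase_of_mem (Finset.mem_erase.mpr ⟨h, Finset.mem_univ i⟩),
    Finset.card_erase_of_mem (Finset.mem_univ k), Finset.card_univ, Fintype.card_fin]
  omega

lemma two_le_of_ne {m : ℕ} {i k : Fin m} (h : i ≠ k) : 2 ≤ m := by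
  have : 1 < Fintype.card (Fin m) := Fintype.one_lt_card_iff_nontrivial.mpr ⟨⟨i, k, h⟩⟩
  simp at this; omega

lemma decomp {m N : ℕ} (M : Matrix (Fin m) (Fin N) ℂ) :
    M * Mᴴ - 1 = Matrix.diagonal (fun i => (M * Mᴴ) i i - 1)
      + ((4 / 2 ^ m : ℂ)) • ∑ T : Finset (Fin m), decoupledBlock M T := by
  ext i k
  rcases eq_or_ne i k with rfl | hik
  · simp only [Matrix.sub_apply, Matrix.one_apply_eq, Matrix.add_apply,
      Matrix.diagonal_apply_eq, Matrix.smul_apply, Matrix.sum_apply]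
    have : ∀ T : Finset (Fin m), decoupledBlock M T i i = 0 := by
      intro T
      simp only [decoupledBlock, Matrix.of_apply]
      exact if_neg (fun hT => hT.2 hT.1)
    rw [Finset.sum_congr rfl fun T _ => this T]
    simp
  · simp only [Matrix.sub_apply, Matrix.one_apply_ne hik, Matrix.add_apply,
      Matrix.diagonal_apply_ne _ hik, Matrix.smul_apply, Matrix.sum_apply, sub_zero, zero_add]
    have : ∀ T : Finset (Fin m), decoupledBlock M T i k
        = if i ∈ T ∧ k ∉ T then (M * Mᴴ) i k else 0 := fun T => rfl
    rw [Finset.sum_congr rfl fun T _ => this T, Finset.sum_ite, Finset.sum_const,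
      Finset.sum_const_zero, add_zero, count_filter hik]
    have hm : 2 ≤ m := two_le_of_ne hik
    have hpow : (2:ℂ) ^ (m - 2) * 4 = 2 ^ m := by
      have h4 : (4:ℂ) = 2 ^ 2 := by norm_num
      rw [h4, ← pow_add, Nat.sub_add_cancel hm]
    rw [nsmul_eq_mul, smul_eq_mul]
    push_cast
    have h2 : (2:ℂ) ^ m ≠ 0 := pow_ne_zero _ two_ne_zero
    field_simp
    rw [← hpow]
    ring

open scoped Matrix.Norms.L2Operator in
lemma pointwise_bound {m N : ℕ} (M : Matrix (Fin m) (Fin N) ℂ) :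
    ‖M * Mᴴ - 1‖ ≤ (⨆ i, |lpNorm 2 (M i) ^ 2 - 1|)
      + (4 / 2 ^ m : ℝ) * ∑ T : Finset (Fin m), ‖decoupledBlock M T‖ := by
  rw [decomp M]
  refine le_trans (norm_add_le _ _) (add_le_add ?_ ?_)
  · refine le_trans (norm_diagonal_le _) ?_
    apply Real.iSup_le ?_ (Real.iSup_nonneg fun i => abs_nonneg _)
    intro i
    have : (M * Mᴴ) i i - 1 = ((lpNorm 2 (M i) ^ 2 - 1 : ℝ) : ℂ) := by
      rw [diag_entry]; push_cast; ring
    rw [this, Complex.norm_real, Real.norm_eq_abs]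
    exact le_ciSup (f := fun i => |lpNorm 2 (M i) ^ 2 - 1|)
      (Set.Finite.bddAbove (Set.finite_range _)) i
  · rw [norm_smul]
    have : ‖(4 / 2 ^ m : ℂ)‖ = (4 / 2 ^ m : ℝ) := by
      rw [show ((4:ℂ) / 2 ^ m) = ((4 / 2 ^ m : ℝ) : ℂ) by push_cast; ring, Complex.norm_real,
        Real.norm_of_nonneg (by positivity)]
    rw [this]
    exact mul_le_mul_of_nonneg_left (norm_sum_le _ _) (by positivity)

open scoped Matrix.Norms.L2Operator in
/-- Matrix decoupling:
`E ‖MM* − I‖ ≤ E max_i |‖m_i‖₂² − 1| + 4 max_{T ⊆ [m]} E ‖M_T M_{T̄}*‖`. -/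
theorem stmt9 {Ω : Type*} [MeasurableSpace Ω] (μ : Measure Ω) [IsProbabilityMeasure μ]
    {m N : ℕ} (M : Ω → Matrix (Fin m) (Fin N) ℂ)
    (h1 : Integrable (fun ω => specNorm (M ω * (M ω)ᴴ - 1)) μ)
    (h2 : Integrable (fun ω => ⨆ i : Fin m, |lpNorm 2 (M ω i) ^ 2 - 1|) μ)
    (h3 : ∀ T : Finset (Fin m), Integrable (fun ω => specNorm (decoupledBlock (M ω) T)) μ) :
    ∫ ω, specNorm (M ω * (M ω)ᴴ - 1) ∂μ ≤
      (∫ ω, (⨆ i : Fin m, |lpNorm 2 (M ω i) ^ 2 - 1|) ∂μ)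
      + 4 * ⨆ T : Finset (Fin m), ∫ ω, specNorm (decoupledBlock (M ω) T) ∂μ := by
  
  simp only [specNorm_eq] at h1 h3 ⊢
  have h2m : (2:ℝ) ^ m ≠ 0 := by positivity
  have hcn : (0:ℝ) ≤ 4 / 2 ^ m := by positivity
  have hintsum : Integrable (fun ω => ∑ T : Finset (Fin m), ‖decoupledBlock (M ω) T‖) μ :=
    integrable_finset_sum _ fun T _ => h3 T
  have step1 : ∫ ω, ‖M ω * (M ω)ᴴ - 1‖ ∂μ ≤
      ∫ ω, ((⨆ i : Fin m, |lpNorm 2 (M ω i) ^ 2 - 1|)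
        + (4 / 2 ^ m : ℝ) * ∑ T : Finset (Fin m), ‖decoupledBlock (M ω) T‖) ∂μ :=
    integral_mono h1 (h2.add (hintsum.const_mul _)) fun ω => pointwise_bound (M ω)
  rw [integral_add h2 (hintsum.const_mul _), MeasureTheory.integral_const_mul,
    integral_finset_sum _ (fun T _ => h3 T)] at step1
  refine step1.trans (add_le_add_right ?_ _)
  have hsup : ∀ T : Finset (Fin m), ∫ ω, ‖decoupledBlock (M ω) T‖ ∂μ ≤
      ⨆ T' : Finset (Fin m), ∫ ω, ‖decoupledBlock (M ω) T'‖ ∂μ := fun T =>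
    le_ciSup (f := fun T' : Finset (Fin m) => ∫ ω, ‖decoupledBlock (M ω) T'‖ ∂μ)
      (Set.Finite.bddAbove (Set.finite_range _)) T
  calc (4 / 2 ^ m : ℝ) * ∑ T : Finset (Fin m), ∫ ω, ‖decoupledBlock (M ω) T‖ ∂μ
      ≤ (4 / 2 ^ m : ℝ) * ∑ _T : Finset (Fin m),
          ⨆ T' : Finset (Fin m), ∫ ω, ‖decoupledBlock (M ω) T'‖ ∂μ :=
        mul_le_mul_of_nonneg_left (Finset.sum_le_sum fun T _ => hsup T) hcn
    _ = (4 / 2 ^ m : ℝ) * ((2 : ℝ) ^ m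
          * ⨆ T' : Finset (Fin m), ∫ ω, ‖decoupledBlock (M ω) T'‖ ∂μ) := by
        rw [Finset.sum_const, Finset.card_univ, Fintype.card_finset, Fintype.card_fin,
          nsmul_eq_mul]
        push_cast
        ring
    _ = 4 * ⨆ T' : Finset (Fin m), ∫ ω, ‖decoupledBlock (M ω) T'‖ ∂μ := by
        field_simp
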